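/- Let μ be a probability measure on the plane ℝ² that is invariant under rotations about the origin. Suppose μ is supported on the annulus {a ≤ |x| ≤ b} with inner radius a = d₀ > 0. Then for every 0 < r ≤ d₀/100 and every x ∈ ℝ², μ(B(x,r)) < 100·r/d₀. Consequently, for all r > 0 there is a universal constant c > 0 such that sup_x μ(B(x,r)) ≤ c·r/d₀. -/

import Mathlib

open Real Complex

lemma sq_abs_exp_sub_exp (a b : ℝ) :
    ‖Complex.exp (a * Complex.I) - Complex.exp (b * Complex.I)‖^2
      = 2 - 2 * Real.cos (a - b) := by
  rw [Complex.sq_norm, Complex.normSq_apply]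
  simp [Complex.exp_ofReal_mul_I_re, Complex.exp_ofReal_mul_I_im, Real.cos_sub]
  nlinarith [Real.sin_sq_add_cos_sq a, Real.sin_sq_add_cos_sq b]

lemma cos_mult_le (N m : ℕ) (hN : 2 ≤ N) (hm1 : 1 ≤ m) (hm2 : m ≤ N - 1) :
    Real.cos (2 * π * m / N) ≤ Real.cos (2 * π / N) := by
  have hNpos : (0:ℝ) < N := by positivity
  have hπ := Real.pi_pos
  have hmN : (m:ℝ) ≤ (N:ℝ) - 1 := by
    have : (m:ℝ) ≤ ((N-1 : ℕ):ℝ) := by exact_mod_cast hm2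
    rw [Nat.cast_sub (by omega)] at this; simpa using this
  have h1 : 2 * π / N ≤ 2 * π * m / N := by
    have hm : (1:ℝ) ≤ m := by exact_mod_cast hm1
    calc 2 * π / N = 2 * π * 1 / N := by ring
    _ ≤ 2 * π * m / N := by gcongr
  have h2 : 2 * π * m / N ≤ 2 * π - 2 * π / N := by
    rw [div_le_iff₀ hNpos]
    have h3 : 2 * π / N * N = 2 * π := by field_simp
    nlinarith
  have hbase : 0 ≤ 2 * π / N := by positivity
  by_cases hc : 2 * π * m / N ≤ π
  · exact Real.cos_le_cos_of_nonneg_of_le_pi hbase hc h1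
  · push_neg at hc
    rw [show (2 * π * m / N) = 2 * π - (2*π - 2 * π * m / N) by ring,
      Real.cos_two_pi_sub]
    apply Real.cos_le_cos_of_nonneg_of_le_pi hbase (by linarith)
    linarith

lemma dist_roots (N : ℕ) (hN : 2 ≤ N) (j k : ℕ) (hj : j < N) (hk : k < j) :
    4 / N ≤ ‖Complex.exp ((2*π*j/N : ℝ) * Complex.I)
      - Complex.exp ((2*π*k/N : ℝ) * Complex.I)‖ := by
  have hNpos : (0:ℝ) < N := by positivity
  have hπ := Real.pi_pos
  set m := j - k with hm
  have hm1 : 1 ≤ m := by omega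
  have hm2 : m ≤ N - 1 := by omega
  have hsub : (2*π*j/N : ℝ) - (2*π*k/N : ℝ) = 2 * π * m / N := by
    rw [hm, Nat.cast_sub (by omega)]; ring
  have hsq := sq_abs_exp_sub_exp (2*π*j/N) (2*π*k/N)
  rw [hsub] at hsq
  have hcos := cos_mult_le N m hN hm1 hm2
  -- 2 - 2 cos (2π/N) = 4 sin(π/N)^2
  have hhalf : Real.cos (2 * π / N) = 2 * Real.cos (π / N)^2 - 1 := by
    rw [show (2 * π / N : ℝ) = 2 * (π / N) by ring, Real.cos_two_mul]
  have hsin : 2 / N ≤ Real.sin (π / N) := by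
    have h1 : π / N ≤ π / 2 := by
      apply div_le_div_of_nonneg_left (le_of_lt hπ) (by norm_num) ?_
      exact_mod_cast hN
    have := Real.mul_le_sin (x := π / N) (by positivity) h1
    calc (2:ℝ)/N = 2/π * (π/N) := by field_simp
    _ ≤ _ := this
  have hpyth := Real.sin_sq_add_cos_sq (π / N)
  have h4N : (0:ℝ) ≤ 4 / N := by positivity
  have habs : (0:ℝ) ≤ ‖Complex.exp ((2*π*j/N : ℝ) * Complex.I)
      - Complex.exp ((2*π*k/N : ℝ) * Complex.I)‖ := norm_nonneg _
  have hsq2 : (4/N:ℝ)^2 ≤ (‖Complex.exp ((2*π*j/N : ℝ) * Complex.I)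
      - Complex.exp ((2*π*k/N : ℝ) * Complex.I)‖)^2 := by
    rw [hsq]
    have e1 : 2 - 2*Real.cos (2*π/N) = 4 * Real.sin (π/N)^2 := by
      rw [hhalf]; linarith
    calc (4/N:ℝ)^2 = 4*(2/N)^2 := by ring
    _ ≤ 4 * Real.sin (π/N)^2 :=
      mul_le_mul_of_nonneg_left (pow_le_pow_left₀ (by positivity) hsin 2) (by norm_num)
    _ = 2 - 2*Real.cos (2*π/N) := e1.symm
    _ ≤ 2 - 2*Real.cos (2*π*m/N) := by linarith
  exact (pow_le_pow_iff_left₀ h4N habs (by norm_num)).mp hsq2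

open MeasureTheory
open scoped ENNReal NNReal

theorem rotation_invariant_annulus_ball_bound :
    ∃ c : ℝ, 0 < c ∧
      ∀ (μ : Measure ℂ), IsProbabilityMeasure μ →
        ∀ d₀ b : ℝ, 0 < d₀ →
          (∀ z : ℂ, ‖z‖ = 1 → Measure.map (fun w => z * w) μ = μ) →
          μ {w : ℂ | ‖w‖ < d₀ ∨ b < ‖w‖} = 0 →
          (∀ r : ℝ, 0 < r → r ≤ d₀ / 100 → ∀ x : ℂ,
              μ (Metric.closedBall x r) < ENNReal.ofReal (100 * r / d₀)) ∧
          (∀ r > (0 : ℝ), ∀ x : ℂ,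
              μ (Metric.closedBall x r) ≤ ENNReal.ofReal (c * r / d₀)) := by
  refine ⟨100, by norm_num, ?_⟩
  intro μ hμ d₀ b hd₀ hrot hnull
  have key : ∀ r : ℝ, 0 < r → r ≤ d₀ / 100 → ∀ x : ℂ,
      μ (Metric.closedBall x r) < ENNReal.ofReal (100 * r / d₀) := by
    intro r hr hr' x
    have hpos : 0 < 100 * r / d₀ := by positivity
    by_cases hx : ‖x‖ < d₀ - r
    · have h0 : μ (Metric.closedBall x r) = 0 := by
        apply measure_mono_null ?_ hnull
        intro w hw
        left
        have hd : ‖w - x‖ ≤ r := by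
          rw [← Complex.dist_eq]; exact hw
        calc ‖w‖ = ‖(w - x) + x‖ := by ring_nf
        _ ≤ ‖w - x‖ + ‖x‖ := norm_add_le _ _
        _ < d₀ := by linarith
      rw [h0]
      exact ENNReal.ofReal_pos.mpr hpos
    · push_neg at hx
      set N : ℕ := ⌊d₀ / (100*r)⌋₊ + 1 with hNdef
      have hq1 : (1:ℝ) ≤ d₀/(100*r) := by
        rw [le_div_iff₀ (by positivity)]; linarith
      have hNgt : d₀/(100*r) < N := by
        rw [hNdef]; push_cast; exact Nat.lt_floor_add_one _
      have hN2 : 2 ≤ N := by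
        have : 1 ≤ ⌊d₀ / (100*r)⌋₊ := Nat.le_floor (by exact_mod_cast hq1)
        omega
      have hNRpos : (0:ℝ) < N := by positivity
      have hNle : (N:ℝ) ≤ d₀/(50*r) := by
        have h1 : (⌊d₀ / (100*r)⌋₊:ℝ) ≤ d₀/(100*r) := Nat.floor_le (by positivity)
        have h2 : d₀/(50*r) = 2 * (d₀/(100*r)) := by field_simp; ring
        push_cast [hNdef]
        linarith
      set z : ℕ → ℂ := fun k => Complex.exp ((2*Real.pi*k/N : ℝ) * Complex.I) with hzdef
      have hz1 : ∀ k, ‖z k‖ = 1 := fun k => Complex.norm_exp_ofReal_mul_I _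
      have hmeq : ∀ k, μ (Metric.closedBall (z k * x) r) = μ (Metric.closedBall x r) := by
        intro k
        have hmap := hrot (z k) (hz1 k)
        have hcont : Measurable (fun w : ℂ => z k * w) := measurable_const_mul _
        calc μ (Metric.closedBall (z k * x) r)
            = (Measure.map (fun w => z k * w) μ) (Metric.closedBall (z k * x) r) := by
              rw [hmap]
        _ = μ ((fun w => z k * w) ⁻¹' Metric.closedBall (z k * x) r) :=
              Measure.map_apply hcont Metric.isClosed_closedBall.measurableSet
        _ = μ (Metric.closedBall x r) := by
              congr 1
              ext w
              simp only [Set.mem_preimage, Metric.mem_closedBall, Complex.dist_eq, ← mul_sub,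
                norm_mul, hz1 k, one_mul]
      have hfar : ∀ a c : Fin N, (c:ℕ) < (a:ℕ) → 2*r < dist ((z a) * x) ((z c) * x) := by
        intro a c hac
        have h4 := dist_roots N hN2 a c a.isLt hac
        have hd : dist (z a * x) (z c * x) = ‖z a - z c‖ * ‖x‖ := by
          rw [Complex.dist_eq, ← sub_mul, norm_mul]
        rw [hd]
        have habsx : (99/100) * d₀ ≤ ‖x‖ := by linarith
        have h4N : 200*r/d₀ ≤ 4/(N:ℝ) := by
          have := div_le_div_of_nonneg_left (by norm_num : (0:ℝ) ≤ 4) hNRpos hNle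
          have he : (4:ℝ)/(d₀/(50*r)) = 200*r/d₀ := by
            field_simp; ring
          linarith [he ▸ this]
        have hmul : (200*r/d₀) * ((99/100)*d₀) ≤ ‖z a - z c‖ * ‖x‖ := by
          apply mul_le_mul (le_trans h4N h4) habsx (by positivity) (norm_nonneg _)
        have he2 : (200*r/d₀) * ((99/100)*d₀) = 198*r := by field_simp; ring
        linarith [he2 ▸ hmul]
      have hdisj : Pairwise (Function.onFun Disjoint
          (fun k : Fin N => Metric.closedBall (z k * x) r)) := by
        intro j k hjk
        rcases lt_or_gt_of_ne (fun h => hjk (Fin.ext h)) with h | h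
        · exact (Metric.closedBall_disjoint_closedBall
            (by rw [dist_comm]; linarith [hfar k j h])).symm.symm
        · exact Metric.closedBall_disjoint_closedBall (by linarith [hfar j k h])
      have hsum : (N:ℝ≥0∞) * μ (Metric.closedBall x r) ≤ 1 := by
        calc (N:ℝ≥0∞) * μ (Metric.closedBall x r)
            = ∑ k : Fin N, μ (Metric.closedBall (z k * x) r) := by
              simp only [hmeq]
              rw [Finset.sum_const, Finset.card_univ, Fintype.card_fin, nsmul_eq_mul]
        _ = μ (⋃ k : Fin N, Metric.closedBall (z k * x) r) := by
              rw [measure_iUnion hdisj (fun k => Metric.isClosed_closedBall.measurableSet),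
                tsum_fintype]
        _ ≤ μ Set.univ := measure_mono (Set.subset_univ _)
        _ = 1 := measure_univ
      have hμB : μ (Metric.closedBall x r) ≤ (N:ℝ≥0∞)⁻¹ := by
        rw [← one_div]
        rw [ENNReal.le_div_iff_mul_le (Or.inl (Nat.cast_ne_zero.mpr (by omega)))
          (Or.inl (ENNReal.natCast_ne_top N))]
        rwa [mul_comm]
      have hlt : (N:ℝ≥0∞)⁻¹ < ENNReal.ofReal (100*r/d₀) := by
        rw [← ENNReal.ofReal_natCast N, ← ENNReal.ofReal_inv_of_pos hNRpos]
        rw [ENNReal.ofReal_lt_ofReal_iff hpos]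
        rw [inv_eq_one_div, div_lt_div_iff₀ hNRpos hd₀]
        rw [div_lt_iff₀ (by positivity : (0:ℝ) < 100*r)] at hNgt
        linarith
      exact lt_of_le_of_lt hμB hlt
  refine ⟨key, ?_⟩
  intro r hr x
  by_cases h : r ≤ d₀/100
  · exact (key r hr h x).le
  · push_neg at h
    calc μ (Metric.closedBall x r) ≤ 1 := prob_le_one
    _ ≤ ENNReal.ofReal (100*r/d₀) := ENNReal.one_le_ofReal.mpr
        (by rw [le_div_iff₀ hd₀]; linarith)
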